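/- For every function f definable in BC⁻ (safe recursion on notation with both composition and recursion linear in safe arguments), there is a polynomial q such that len(f(n⃗; s⃗)) ≤ q(len n₁, …, len n_k) + max_j len s_j, where len is binary length. -/

import Mathlib

/-- Split a list into consecutive chunks of the given sizes. -/
def chunks : List ℕ → List ℕ → List (List ℕ)
  | [], _ => []
  | m :: ms, s => s.take m :: chunks ms (s.drop m)

/-- The class BC⁻ of safe-recursive functions, semantically: `BC k l f` means
`f`, taking a list of `k` normal and a list of `l` safe arguments, is built
from zero, the binary successors, the predecessor, projections and branching,
closed under (linear) safe composition and safe recursion on notation. -/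
inductive BC : ℕ → ℕ → (List ℕ → List ℕ → ℕ) → Prop
  | zero (k l : ℕ) : BC k l (fun _ _ => 0)
  | suc0 : BC 0 1 (fun _ s => 2 * s.headD 0)
  | suc1 : BC 0 1 (fun _ s => 2 * s.headD 0 + 1)
  | pred : BC 0 1 (fun _ s => s.headD 0 / 2)
  | proj (k l i : ℕ) (hi : i < k + l) : BC k l (fun x s => (x ++ s).getD i 0)
  | bran : BC 0 3 (fun _ s => if s.headD 0 = 0 then s.getD 1 0 else s.getD 2 0)
  | comp (k k' : ℕ) (F : List ℕ → List ℕ → ℕ)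
      (gs : List (List ℕ → List ℕ → ℕ))
      (hs : List (ℕ × (List ℕ → List ℕ → ℕ)))
      (hF : BC k' hs.length F)
      (hgs : ∀ g ∈ gs, BC k 0 g) (hglen : gs.length = k')
      (hhs : ∀ p ∈ hs, BC k p.1 p.2) :
      BC k (hs.map Prod.fst).sum
        (fun x s =>
          F (gs.map (fun g => g x []))
            (List.zipWith (fun p c => p.2 x c) hs (chunks (hs.map Prod.fst) s)))
  | srec (k l : ℕ) (G H0 H1 F : List ℕ → List ℕ → ℕ)
      (hG : BC k l G) (hH0 : BC (k + 1) (l + 1) H0) (hH1 : BC (k + 1) (l + 1) H1)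
      (hF0 : ∀ x s, F (0 :: x) s = G x s)
      (hFs : ∀ n x s, 1 ≤ n →
        F (n :: x) s =
          (if n % 2 = 1 then H1 else H0) (n / 2 :: x) (s ++ [F (n / 2 :: x) s])) :
      BC (k + 1) l F

/-! ### Auxiliary lemmas -/

lemma le_foldr_max {s : List ℕ} {a : ℕ} (h : a ∈ s) : a ≤ s.foldr max 0 := by
  induction s with
  | nil => simp at h
  | cons b t ih =>
    rcases List.mem_cons.mp h with rfl | h'
    · exact le_max_left _ _
    · exact le_trans (ih h') (le_max_right _ _)

lemma foldr_max_le {s : List ℕ} {B : ℕ} (h : ∀ a ∈ s, a ≤ B) : s.foldr max 0 ≤ B := by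
  induction s with
  | nil => simp
  | cons b t ih =>
    simp only [List.foldr_cons]
    exact max_le (h b List.mem_cons_self) (ih fun a ha => h a (List.mem_cons_of_mem _ ha))

lemma size_getD_le (s : List ℕ) (j : ℕ) :
    Nat.size (s.getD j 0) ≤ (s.map Nat.size).foldr max 0 := by
  by_cases hj : j < s.length
  · rw [List.getD_eq_getElem s 0 hj]
    exact le_foldr_max (List.mem_map_of_mem (List.getElem_mem _))
  · rw [List.getD_eq_default s 0 (le_of_not_gt hj)]
    simp [Nat.size_zero]

lemma foldr_max_append_singleton (u : List ℕ) (b : ℕ) :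
    (u ++ [b]).foldr max 0 = max (u.foldr max 0) b := by
  induction u with
  | nil => simp
  | cons a t ih => simp [ih, max_assoc]

lemma eval_mono {n : ℕ} (p : MvPolynomial (Fin n) ℕ) {v w : Fin n → ℕ}
    (h : ∀ i, v i ≤ w i) : MvPolynomial.eval v p ≤ MvPolynomial.eval w p := by
  induction p using MvPolynomial.induction_on with
  | C a => simp
  | add p q hp hq => simp only [map_add]; exact add_le_add hp hq
  | mul_X p i hp => simp only [map_mul, MvPolynomial.eval_X]; exact Nat.mul_le_mul hp (h i)

lemma eval_bind₁' {n m : ℕ} (g : Fin n → MvPolynomial (Fin m) ℕ)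
    (p : MvPolynomial (Fin n) ℕ) (v : Fin m → ℕ) :
    MvPolynomial.eval v (MvPolynomial.bind₁ g p) =
      MvPolynomial.eval (fun i => MvPolynomial.eval v (g i)) p := by
  simpa using MvPolynomial.eval₂Hom_bind₁ (RingHom.id ℕ) v g p

lemma chunks_length (ms : List ℕ) (s : List ℕ) : (chunks ms s).length = ms.length := by
  induction ms generalizing s with
  | nil => rfl
  | cons m ms ih => simp [chunks, ih]

lemma mem_chunks {ms s : List ℕ} {c : List ℕ} (hc : c ∈ chunks ms s) :
    ∀ a ∈ c, a ∈ s := by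
  induction ms generalizing s with
  | nil => simp [chunks] at hc
  | cons m ms ih =>
    rcases List.mem_cons.mp hc with rfl | h'
    · exact fun a ha => List.mem_of_mem_take ha
    · exact fun a ha => List.mem_of_mem_drop (ih h' a ha)

lemma chunks_getElem_length {ms s : List ℕ} (hlen : ms.sum ≤ s.length) (j : ℕ)
    (hj : j < ms.length) :
    ((chunks ms s)[j]'(by rw [chunks_length]; exact hj)).length = ms[j] := by
  induction ms generalizing s j with
  | nil => simp at hj
  | cons m ms ih =>
    simp only [List.sum_cons] at hlen
    cases j with
    | zero =>
      show (s.take m).length = m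
      simp [List.length_take]; omega
    | succ j =>
      simp only [List.length_cons, Nat.succ_lt_succ_iff] at hj
      show ((chunks ms (s.drop m))[j]'_).length = ms[j]
      exact ih (by simp [List.length_drop]; omega) j hj

lemma size_two_mul (n : ℕ) : Nat.size (2 * n) ≤ Nat.size n + 1 := by
  rw [Nat.size_le, pow_succ, mul_comm (2 ^ Nat.size n) 2]
  have := Nat.lt_size_self n
  omega

lemma size_two_mul_add_one (n : ℕ) : Nat.size (2 * n + 1) ≤ Nat.size n + 1 := by
  rw [Nat.size_le, pow_succ, mul_comm (2 ^ Nat.size n) 2]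
  have := Nat.lt_size_self n
  omega

lemma size_div_two (n : ℕ) : Nat.size (n / 2) ≤ Nat.size n :=
  Nat.size_le_size (Nat.div_le_self _ _)

lemma size_div_two_lt {n : ℕ} (hn : 1 ≤ n) : Nat.size (n / 2) < Nat.size n := by
  rw [Nat.lt_size]
  rcases Nat.eq_zero_or_pos (n / 2) with h | h
  · simpa [h] using hn
  · have h1 : Nat.size (n / 2) - 1 < Nat.size (n / 2) :=
      Nat.sub_lt (Nat.size_pos.mpr h) one_pos
    have h2 : 2 ^ (Nat.size (n / 2) - 1) ≤ n / 2 := Nat.lt_size.mp h1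
    have h3 : Nat.size (n / 2) = (Nat.size (n / 2) - 1) + 1 :=
      (Nat.succ_pred_eq_of_pos (Nat.size_pos.mpr h)).symm
    rw [h3, pow_succ]
    calc 2 ^ (Nat.size (n / 2) - 1) * 2 ≤ (n / 2) * 2 := by
          exact Nat.mul_le_mul_right _ h2
      _ ≤ n := by omega

/-- Bellantoni–Cook poly-max bounding lemma: every BC⁻ function is bounded,
in binary length, by a polynomial in the lengths of its normal arguments plus
the maximum length of its safe arguments. -/
theorem stmt_10 (k l : ℕ) (f : List ℕ → List ℕ → ℕ) (hf : BC k l f) :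
    ∃ q : MvPolynomial (Fin k) ℕ,
      ∀ x s : List ℕ, x.length = k → s.length = l →
        Nat.size (f x s) ≤
          MvPolynomial.eval (fun i : Fin k => Nat.size (x.getD (i : ℕ) 0)) q +
            (s.map Nat.size).foldr max 0 := by
  induction hf with
  | zero k l =>
    exact ⟨0, by simp⟩
  | suc0 =>
    refine ⟨MvPolynomial.C 1, fun x s hx hs => ?_⟩
    cases s with
    | nil => simp at hs
    | cons a t =>
      simp only [List.headD_cons, List.map_cons, List.foldr_cons, MvPolynomial.eval_C]
      calc Nat.size (2 * a) ≤ Nat.size a + 1 := size_two_mul a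
        _ ≤ 1 + max (Nat.size a) ((t.map Nat.size).foldr max 0) := by
            rw [add_comm]; exact add_le_add le_rfl (le_max_left _ _)
  | suc1 =>
    refine ⟨MvPolynomial.C 1, fun x s hx hs => ?_⟩
    cases s with
    | nil => simp at hs
    | cons a t =>
      simp only [List.headD_cons, List.map_cons, List.foldr_cons, MvPolynomial.eval_C]
      calc Nat.size (2 * a + 1) ≤ Nat.size a + 1 := size_two_mul_add_one a
        _ ≤ 1 + max (Nat.size a) ((t.map Nat.size).foldr max 0) := by
            rw [add_comm]; exact add_le_add le_rfl (le_max_left _ _)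
  | pred =>
    refine ⟨0, fun x s hx hs => ?_⟩
    cases s with
    | nil => simp at hs
    | cons a t =>
      simp only [List.headD_cons, List.map_cons, List.foldr_cons, map_zero, zero_add]
      exact le_trans (size_div_two a) (le_max_left _ _)
  | proj k l i hi =>
    by_cases hik : i < k
    · refine ⟨MvPolynomial.X ⟨i, hik⟩, fun x s hx hs => ?_⟩
      beta_reduce
      rw [List.getD_append x s 0 i (by omega), MvPolynomial.eval_X]
      exact Nat.le_add_right _ _
    · refine ⟨0, fun x s hx hs => ?_⟩
      beta_reduce
      rw [List.getD_append_right x s 0 i (by omega), map_zero, zero_add, hx]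
      exact size_getD_le s (i - k)
  | bran =>
    refine ⟨0, fun x s hx hs => ?_⟩
    beta_reduce
    rw [map_zero, zero_add]
    split
    · exact size_getD_le s 1
    · exact size_getD_le s 2
  | comp k k' F gs hs hF hgs hglen hhs ihF ihgs ihhs =>
    obtain ⟨qF, hqF⟩ := ihF
    choose qg hqg using ihgs
    choose qh hqh using ihhs
    set Qg : Fin k' → MvPolynomial (Fin k) ℕ :=
      fun i => qg (gs[(i : ℕ)]'(by rw [hglen]; exact i.isLt))
        (List.getElem_mem _) with hQg
    refine ⟨MvPolynomial.bind₁ Qg qF + (hs.attach.map fun p => qh p.1 p.2).sum,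
      fun x s hx hsl => ?_⟩
    beta_reduce
    set v : Fin k → ℕ := fun i => Nat.size (x.getD (i : ℕ) 0) with hv
    set y := gs.map (fun g => g x []) with hy
    set cs := chunks (hs.map Prod.fst) s with hcs
    set t := List.zipWith (fun p c => p.2 x c) hs cs with ht
    have hylen : y.length = k' := by simp [hy, hglen]
    have hcslen : cs.length = hs.length := by simp [hcs, chunks_length]
    have htlen : t.length = hs.length := by simp [ht, hcslen]
    have hsum : (hs.map Prod.fst).sum ≤ s.length := le_of_eq hsl.symm
    -- bound on each safe argument of F
    have htbound : ∀ a ∈ t, Nat.size a ≤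
        ((hs.attach.map fun p => qh p.1 p.2).map (MvPolynomial.eval v)).sum +
          (s.map Nat.size).foldr max 0 := by
      intro a ha
      obtain ⟨j, hj, rfl⟩ := List.mem_iff_getElem.mp ha
      have hj' : j < hs.length := htlen ▸ hj
      have hjcs : j < cs.length := hcslen ▸ hj'
      have hgetel : t[j] = (hs[j]'hj').2 x (cs[j]'hjcs) := List.getElem_zipWith
      rw [hgetel]
      have hcj : (cs[j]'hjcs).length = (hs[j]'hj').1 := by
        have := chunks_getElem_length (ms := hs.map Prod.fst) (s := s) hsum j
          (by simpa using hj')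
        simpa [hcs] using this
      have h1 := hqh (hs[j]'hj') (List.getElem_mem _) x (cs[j]'hjcs) hx hcj
      have h2 : ((cs[j]'hjcs).map Nat.size).foldr max 0 ≤ (s.map Nat.size).foldr max 0 := by
        apply foldr_max_le
        intro b hb
        obtain ⟨a', ha', rfl⟩ := List.mem_map.mp hb
        have : a' ∈ s := mem_chunks (List.getElem_mem hjcs) a' ha'
        exact le_foldr_max (List.mem_map_of_mem this)
      have h3 : MvPolynomial.eval v (qh (hs[j]'hj') (List.getElem_mem _)) ≤
          ((hs.attach.map fun p => qh p.1 p.2).map (MvPolynomial.eval v)).sum := by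
        apply List.single_le_sum (fun _ _ => Nat.zero_le _)
        rw [List.map_map]
        exact List.mem_map.mpr ⟨⟨hs[j]'hj', List.getElem_mem hj'⟩, List.mem_attach _ _, rfl⟩
      calc Nat.size ((hs[j]'hj').2 x (cs[j]'hjcs))
          ≤ MvPolynomial.eval v (qh (hs[j]'hj') (List.getElem_mem _)) +
              ((cs[j]'hjcs).map Nat.size).foldr max 0 := h1
        _ ≤ ((hs.attach.map fun p => qh p.1 p.2).map (MvPolynomial.eval v)).sum +
              (s.map Nat.size).foldr max 0 := add_le_add h3 h2
    have hMt : (t.map Nat.size).foldr max 0 ≤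
        ((hs.attach.map fun p => qh p.1 p.2).map (MvPolynomial.eval v)).sum +
          (s.map Nat.size).foldr max 0 := by
      apply foldr_max_le
      intro b hb
      obtain ⟨a, ha, rfl⟩ := List.mem_map.mp hb
      exact htbound a ha
    -- bound on the normal arguments of F
    have hyb : ∀ i : Fin k', Nat.size (y.getD (i : ℕ) 0) ≤ MvPolynomial.eval v (Qg i) := by
      intro i
      have hik : (i : ℕ) < y.length := hylen ▸ i.isLt
      have higs : (i : ℕ) < gs.length := by rw [hglen]; exact i.isLt
      rw [List.getD_eq_getElem y 0 hik]
      have : y[(i : ℕ)] = (gs[(i : ℕ)]'higs) x [] := by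
        simp [hy, List.getElem_map]
      rw [this]
      have h := hqg (gs[(i : ℕ)]'higs) (List.getElem_mem higs) x [] hx rfl
      simp only [List.map_nil, List.foldr_nil, add_zero] at h
      rw [hQg, hv]
      exact h
    have hmain := hqF y t hylen htlen
    calc Nat.size (F y t)
        ≤ MvPolynomial.eval (fun i : Fin k' => Nat.size (y.getD (i : ℕ) 0)) qF +
            (t.map Nat.size).foldr max 0 := hmain
      _ ≤ MvPolynomial.eval (fun i => MvPolynomial.eval v (Qg i)) qF +
            (((hs.attach.map fun p => qh p.1 p.2).map (MvPolynomial.eval v)).sum +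
              (s.map Nat.size).foldr max 0) :=
          add_le_add (eval_mono qF hyb) hMt
      _ = MvPolynomial.eval v (MvPolynomial.bind₁ Qg qF +
            (hs.attach.map fun p => qh p.1 p.2).sum) + (s.map Nat.size).foldr max 0 := by
          rw [map_add, eval_bind₁', map_list_sum]
          ring
  | srec k l G H0 H1 F hG hH0 hH1 hF0 hFs ihG ihH0 ihH1 =>
    obtain ⟨qG, hqG⟩ := ihG
    obtain ⟨qH0, hqH0⟩ := ihH0
    obtain ⟨qH1, hqH1⟩ := ihH1
    refine ⟨MvPolynomial.X 0 * (qH0 + qH1) + MvPolynomial.rename Fin.succ qG,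
      fun x s hx hsl => ?_⟩
    cases x with
    | nil => simp at hx
    | cons n x' =>
      have hx' : x'.length = k := by simpa using hx
      induction n using Nat.strong_induction_on with
      | _ n ih =>
        set vx : Fin k → ℕ := fun i => Nat.size (x'.getD (i : ℕ) 0) with hvx
        have hveq : ∀ m : ℕ,
            (fun i : Fin (k + 1) => Nat.size ((m :: x').getD (i : ℕ) 0)) ∘ Fin.succ = vx := by
          intro m; funext i
          simp [Function.comp, List.getD_cons_succ, hvx]
        have IH := ih
        rcases Nat.eq_zero_or_pos n with rfl | hn
        · rw [hF0 x' s]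
          have h1 := hqG x' s hx' hsl
          have h2 : MvPolynomial.eval
              (fun i : Fin (k + 1) => Nat.size (((0 : ℕ) :: x').getD (i : ℕ) 0))
              (MvPolynomial.rename Fin.succ qG) = MvPolynomial.eval vx qG := by
            rw [MvPolynomial.eval_rename, hveq 0]
          calc Nat.size (G x' s) ≤ MvPolynomial.eval vx qG + (s.map Nat.size).foldr max 0 := h1
            _ ≤ _ := by rw [map_add, h2]; exact add_le_add (Nat.le_add_left _ _) le_rfl
        · rw [hFs n x' s hn]
          have hrec := ih (n / 2) (Nat.div_lt_self hn one_lt_two) (by simp [hx'])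
          set v : Fin (k + 1) → ℕ :=
            fun i => Nat.size ((n :: x').getD (i : ℕ) 0) with hv
          set w : Fin (k + 1) → ℕ :=
            fun i => Nat.size ((n / 2 :: x').getD (i : ℕ) 0) with hw
          have hwv : ∀ i, w i ≤ v i := by
            intro i
            refine Fin.cases ?_ (fun j => ?_) i
            · simp only [hw, hv, Fin.val_zero, List.getD_cons_zero]
              exact size_div_two n
            · simp [hw, hv, List.getD_cons_succ]
          have hw0 : w 0 = Nat.size (n / 2) := by simp [hw]
          have hv0 : v 0 = Nat.size n := by simp [hv]
          -- bound for the safe list s ++ [F (n/2 :: x') s]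
          have hMs : (((s ++ [F (n / 2 :: x') s]).map Nat.size).foldr max 0) ≤
              MvPolynomial.eval w (MvPolynomial.X 0 * (qH0 + qH1) +
                MvPolynomial.rename Fin.succ qG) + (s.map Nat.size).foldr max 0 := by
            rw [List.map_append, List.map_singleton, foldr_max_append_singleton]
            exact max_le (Nat.le_add_left _ _) hrec
          -- bound via H0 / H1
          have hH : Nat.size ((if n % 2 = 1 then H1 else H0) (n / 2 :: x')
                (s ++ [F (n / 2 :: x') s])) ≤
              MvPolynomial.eval w (qH0 + qH1) +
                (((s ++ [F (n / 2 :: x') s]).map Nat.size).foldr max 0) := by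
            have hlen1 : (n / 2 :: x').length = k + 1 := by simpa using hx'
            have hlen2 : (s ++ [F (n / 2 :: x') s]).length = l + 1 := by simp [hsl]
            by_cases hb : n % 2 = 1
            · rw [if_pos hb]
              refine le_trans (hqH1 _ _ hlen1 hlen2) ?_
              rw [map_add]
              exact add_le_add (Nat.le_add_left _ _) le_rfl
            · rw [if_neg hb]
              refine le_trans (hqH0 _ _ hlen1 hlen2) ?_
              rw [map_add]
              exact add_le_add (Nat.le_add_right _ _) le_rfl
          -- arithmetic
          set A := MvPolynomial.eval v (qH0 + qH1) with hA
          set a := MvPolynomial.eval w (qH0 + qH1) with ha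
          have haA : a ≤ A := eval_mono _ hwv
          have hwrename : MvPolynomial.eval w (MvPolynomial.rename Fin.succ qG) =
              MvPolynomial.eval v (MvPolynomial.rename Fin.succ qG) := by
            rw [MvPolynomial.eval_rename, MvPolynomial.eval_rename, hveq (n / 2), hveq n]
          have hsz : Nat.size (n / 2) + 1 ≤ Nat.size n := size_div_two_lt hn
          have hkey : a + (Nat.size (n / 2) * a) ≤ Nat.size n * A := by
            calc a + Nat.size (n / 2) * a ≤ A + Nat.size (n / 2) * A :=
                add_le_add haA (Nat.mul_le_mul_left _ haA)
              _ = (Nat.size (n / 2) + 1) * A := by ring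
              _ ≤ Nat.size n * A := Nat.mul_le_mul_right _ hsz
          calc Nat.size ((if n % 2 = 1 then H1 else H0) (n / 2 :: x')
                (s ++ [F (n / 2 :: x') s]))
              ≤ a + (((s ++ [F (n / 2 :: x') s]).map Nat.size).foldr max 0) := hH
            _ ≤ a + (MvPolynomial.eval w (MvPolynomial.X 0 * (qH0 + qH1) +
                  MvPolynomial.rename Fin.succ qG) + (s.map Nat.size).foldr max 0) :=
                add_le_add le_rfl hMs
            _ = (a + Nat.size (n / 2) * a) +
                  MvPolynomial.eval v (MvPolynomial.rename Fin.succ qG) +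
                  (s.map Nat.size).foldr max 0 := by
                rw [map_add, map_mul, MvPolynomial.eval_X, hw0, hwrename, ← ha]; ring
            _ ≤ Nat.size n * A + MvPolynomial.eval v (MvPolynomial.rename Fin.succ qG) +
                  (s.map Nat.size).foldr max 0 :=
                add_le_add (add_le_add hkey le_rfl) le_rfl
            _ = MvPolynomial.eval v (MvPolynomial.X 0 * (qH0 + qH1) +
                  MvPolynomial.rename Fin.succ qG) + (s.map Nat.size).foldr max 0 := by
                rw [map_add, map_mul, MvPolynomial.eval_X, hv0, hA]
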